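/- For N-partite joint distributions with {-1,1} outcomes: if there exist a finite probability space (Ω,ν) and functions f_{n,s_n}: Ω → [-1,1] such that for every subset {n₁<...<n_M} ⊆ {1,...,N} and all settings, ⟨λ_{n₁}^{(s_{n₁})}···λ_{n_M}^{(s_{n_M})}⟩ = Σ_ω ν(ω) f_{n₁,s_{n₁}}(ω)···f_{n_M,s_{n_M}}(ω) (with the empty product giving 1), then the family admits an LHV model, with conditional distributions P_n^{(s_n)}({±1}|ω) = (1 ± f_{n,s_n}(ω))/2. -/
import Mathlib


/-- If all correlation functions of a family of N-partite joint distributions with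
`±1`-valued outcomes admit an LHV-form representation through `[-1,1]`-valued
functions `f_{n,s_n}` on a common finite probability space, then the family admits
an LHV model with conditional distributions `P_n^{(s_n)}({±1}|ω) = (1 ± f_{n,s_n}(ω))/2`. -/
theorem correlations_lhv_form_implies_lhv (N : ℕ) (S : Fin N → ℕ)
    (P : (s : ∀ n, Fin (S n)) → (Fin N → ℤ) → ℝ)
    (hP0 : ∀ (s : ∀ n, Fin (S n)),
      ∀ lam ∈ Fintype.piFinset (fun _ : Fin N => ({-1, 1} : Finset ℤ)), 0 ≤ P s lam)
    (hP1 : ∀ (s : ∀ n, Fin (S n)),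
      ∑ lam ∈ Fintype.piFinset (fun _ : Fin N => ({-1, 1} : Finset ℤ)), P s lam = 1)
    (Ω : Type) [Fintype Ω] (ν : Ω → ℝ)
    (hν0 : ∀ ω, 0 ≤ ν ω) (hν1 : ∑ ω, ν ω = 1)
    (f : (n : Fin N) → Fin (S n) → Ω → ℝ)
    (hf : ∀ n s ω, |f n s ω| ≤ 1)
    (hcorr : ∀ (s : ∀ n, Fin (S n)) (J : Finset (Fin N)),
      (∑ lam ∈ Fintype.piFinset (fun _ : Fin N => ({-1, 1} : Finset ℤ)),
          (∏ n ∈ J, (lam n : ℝ)) * P s lam)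
        = ∑ ω, ν ω * ∏ n ∈ J, f n (s n) ω) :
    ∀ (s : ∀ n, Fin (S n)),
      ∀ lam ∈ Fintype.piFinset (fun _ : Fin N => ({-1, 1} : Finset ℤ)),
        P s lam = ∑ ω, ν ω * ∏ n, (1 + (lam n : ℝ) * f n (s n) ω) / 2 := by
  intro s lam hlam
  have hlam' : ∀ n, lam n = -1 ∨ lam n = 1 := by
    intro n
    have := Fintype.mem_piFinset.mp hlam n
    simpa using this
  -- expansion of products of (1 + x n) over subsets
  have expand : ∀ (g : Fin N → ℝ),
      (∏ n, (1 + (lam n : ℝ) * g n)) =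
      ∑ J ∈ (Finset.univ : Finset (Fin N)).powerset,
        (∏ n ∈ J, (lam n : ℝ)) * ∏ n ∈ J, g n := by
    intro g
    have h := Finset.prod_add (fun n => (lam n : ℝ) * g n) (fun _ => (1 : ℝ))
      Finset.univ
    simp only [Finset.prod_const_one, mul_one] at h
    calc ∏ n, (1 + (lam n : ℝ) * g n)
        = ∏ n, ((lam n : ℝ) * g n + 1) := by
          refine Finset.prod_congr rfl fun n _ => by ring
      _ = ∑ J ∈ Finset.univ.powerset, ∏ n ∈ J, ((lam n : ℝ) * g n) := h
      _ = _ := Finset.sum_congr rfl fun J _ => Finset.prod_mul_distrib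
  -- orthogonality
  have orth : ∀ μ ∈ Fintype.piFinset (fun _ : Fin N => ({-1, 1} : Finset ℤ)),
      (∏ n, (1 + (lam n : ℝ) * (μ n : ℝ))) = if μ = lam then 2 ^ N else 0 := by
    intro μ hμ
    by_cases h : μ = lam
    · subst h
      rw [if_pos rfl]
      have h2 : ∀ n ∈ Finset.univ, (1 + (μ n : ℝ) * (μ n : ℝ)) = 2 := by
        intro n _
        rcases hlam' n with h1 | h1 <;> rw [h1] <;> norm_num
      rw [Finset.prod_congr rfl h2, Finset.prod_const]
      simp
    · rw [if_neg h]
      obtain ⟨n, hn⟩ := Function.ne_iff.mp h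
      apply Finset.prod_eq_zero (Finset.mem_univ n)
      have hμn : μ n = -1 ∨ μ n = 1 := by
        have := Fintype.mem_piFinset.mp hμ n
        simpa using this
      rcases hlam' n with h1 | h1 <;> rcases hμn with h2 | h2 <;>
        rw [h1, h2] <;> first | (exact absurd (h2.trans h1.symm) hn) | norm_num
  -- main computation
  have key : ∑ ω, ν ω * ∏ n, (1 + (lam n : ℝ) * f n (s n) ω) / 2
      = (1 / 2 ^ N) *
        ∑ μ ∈ Fintype.piFinset (fun _ : Fin N => ({-1, 1} : Finset ℤ)),
          P s μ * ∏ n, (1 + (lam n : ℝ) * (μ n : ℝ)) := by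
    calc ∑ ω, ν ω * ∏ n, (1 + (lam n : ℝ) * f n (s n) ω) / 2
        = ∑ ω, ν ω * ((1 / 2 ^ N) * ∏ n, (1 + (lam n : ℝ) * f n (s n) ω)) := by
          refine Finset.sum_congr rfl fun ω _ => ?_
          rw [Finset.prod_div_distrib, Finset.prod_const]
          simp [div_eq_mul_inv, mul_comm]
      _ = (1 / 2 ^ N) * ∑ ω, ν ω * ∏ n, (1 + (lam n : ℝ) * f n (s n) ω) := by
          rw [Finset.mul_sum]; refine Finset.sum_congr rfl fun ω _ => by ring
      _ = (1 / 2 ^ N) * ∑ ω, ν ω *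
            ∑ J ∈ (Finset.univ : Finset (Fin N)).powerset,
              (∏ n ∈ J, (lam n : ℝ)) * ∏ n ∈ J, f n (s n) ω := by
          congr 1
          exact Finset.sum_congr rfl fun ω _ => by rw [expand]
      _ = (1 / 2 ^ N) * ∑ J ∈ (Finset.univ : Finset (Fin N)).powerset,
            (∏ n ∈ J, (lam n : ℝ)) * ∑ ω, ν ω * ∏ n ∈ J, f n (s n) ω := by
          congr 1
          simp only [Finset.mul_sum]
          rw [Finset.sum_comm]
          exact Finset.sum_congr rfl fun J _ => Finset.sum_congr rfl fun ω _ => by ring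
      _ = (1 / 2 ^ N) * ∑ J ∈ (Finset.univ : Finset (Fin N)).powerset,
            (∏ n ∈ J, (lam n : ℝ)) *
            ∑ μ ∈ Fintype.piFinset (fun _ : Fin N => ({-1, 1} : Finset ℤ)),
              (∏ n ∈ J, (μ n : ℝ)) * P s μ := by
          congr 1
          exact Finset.sum_congr rfl fun J _ => by rw [hcorr s J]
      _ = (1 / 2 ^ N) *
            ∑ μ ∈ Fintype.piFinset (fun _ : Fin N => ({-1, 1} : Finset ℤ)),
              P s μ * ∏ n, (1 + (lam n : ℝ) * (μ n : ℝ)) := by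
          congr 1
          simp only [Finset.mul_sum]
          rw [Finset.sum_comm]
          refine Finset.sum_congr rfl fun μ _ => ?_
          rw [expand (fun n => (μ n : ℝ)), Finset.mul_sum]
          exact Finset.sum_congr rfl fun J _ => by ring
  rw [key]
  rw [Finset.sum_congr rfl fun μ hμ => by rw [orth μ hμ, mul_ite, mul_zero]]
  rw [Finset.sum_ite_eq' _ lam (fun μ => P s μ * 2 ^ N), if_pos hlam]
  field_simp
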